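/- Let Ω ⊂ ℝⁿ satisfy the visibility property at 0 ∈ ∂Ω. Then the tangent cone to Ω at 0 exists: setting Ω_s = s⁻¹Ω for s > 0, there is an open cone Ω₀ with vertex 0 (the epigraph of the 1-homogeneous function ω₀(x') = |x'| D⁺_{x'/|x'|}ω(0) of one-sided radial derivatives of the graph function ω) such that lim_{s→0⁺} dist_H(Ω_s ∩ B_R, Ω₀ ∩ B_R) = 0 for every R > 0. -/

import Mathlib

open MeasureTheory Metric Set Filter
open scoped Topology ENNReal NNReal RealInnerProductSpace

noncomputable section

abbrev Eucl (n : ℕ) : Type := EuclideanSpace ℝ (Fin n)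

/-- Divergence of a vector field on `Eucl n`. -/
def diverg {n : ℕ} (Φ : Eucl n → Eucl n) (x : Eucl n) : ℝ :=
  ∑ i, fderiv ℝ Φ x (EuclideanSpace.single i 1) i

/-- Total variation `|Df|(U)` of `f` on the set `U`, defined by duality with
compactly supported `C¹` vector fields bounded by one. -/
def totalVariation {n : ℕ} (f : Eucl n → ℝ) (U : Set (Eucl n)) : ℝ≥0∞ :=
  ⨆ Φ : {Φ : Eucl n → Eucl n // ContDiff ℝ 1 Φ ∧ HasCompactSupport Φ ∧
      tsupport Φ ⊆ U ∧ ∀ x, ‖Φ x‖ ≤ 1},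
    ENNReal.ofReal (∫ x in U, f x * diverg Φ.1 x)

/-- `f ∈ BV(U)`: `f` is integrable on `U` with finite total variation in `U`. -/
def MemBV {n : ℕ} (f : Eucl n → ℝ) (U : Set (Eucl n)) : Prop :=
  IntegrableOn f U volume ∧ totalVariation f U < ⊤

/-- `f ∈ BV_loc(Ω)`: `f ∈ BV(Ω ∩ A)` for every bounded open set `A ⊆ ℝⁿ`. -/
def MemBVloc {n : ℕ} (f : Eucl n → ℝ) (Ω : Set (Eucl n)) : Prop :=
  ∀ A : Set (Eucl n), IsOpen A → Bornology.IsBounded A → MemBV f (Ω ∩ A)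

/-- Perimeter `P(E;U) = |D1_E|(U)` of a set `E` in `U`. -/
def perim {n : ℕ} (E U : Set (Eucl n)) : ℝ≥0∞ :=
  totalVariation (Set.indicator E fun _ => (1 : ℝ)) U

/-- `K ⊂⊂ A` : `K` is compactly contained in `A`. -/
def CptIn {n : ℕ} (K A : Set (Eucl n)) : Prop :=
  IsCompact (closure K) ∧ closure K ⊆ A

/-- The minimality gap `Ψ_Ω(f;A)` of a function `f` in `A`, relative to `Ω`. -/
def minGap {n : ℕ} (Ω A : Set (Eucl n)) (f : Eucl n → ℝ) : ℝ≥0∞ :=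
  totalVariation f (Ω ∩ A) -
    ⨅ g : {g : Eucl n → ℝ // MemBVloc g Ω ∧ CptIn (tsupport (g - f)) A},
      totalVariation g.1 (Ω ∩ A)

/-- The minimality gap `Ψ_Ω(E;A)` of a set `E` in `A`, relative to `Ω`. -/
def minGapSet {n : ℕ} (Ω A E : Set (Eucl n)) : ℝ≥0∞ :=
  minGap Ω A (Set.indicator E fun _ => (1 : ℝ))

/-- The point `(x', t) ∈ ℝ^{n+1}` obtained by appending the coordinate `t` to `x' ∈ ℝⁿ`. -/
def snocE {n : ℕ} (x' : Eucl n) (t : ℝ) : Eucl (n+1) :=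
  (EuclideanSpace.equiv (Fin (n+1)) ℝ).symm (Fin.snoc (EuclideanSpace.equiv (Fin n) ℝ x') t)

/-- The first `n` coordinates `x'` of a point `x ∈ ℝ^{n+1}`. -/
def initE {n : ℕ} (x : Eucl (n+1)) : Eucl n :=
  (EuclideanSpace.equiv (Fin n) ℝ).symm (Fin.init (EuclideanSpace.equiv (Fin (n+1)) ℝ x))

/-- The last coordinate of a point `x ∈ ℝ^{n+1}`. -/
def lastE {n : ℕ} (x : Eucl (n+1)) : ℝ := x (Fin.last n)

/-- Conditions (V1)–(V2) for a visibility function: `u ∈ C¹([0,T))` (with derivative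
`u'`), `u(0) = u'(0) = 0`, `0 ≤ u' ≤ 1/2`, and
`γ_u(t) = t⁻¹ sup_{0<s≤t} √(u(s)/s + u'(s))` is summable on `(0,T)`. -/
def VisibilityV12 (u u' : ℝ → ℝ) (T : ℝ) : Prop :=
  0 < T ∧ u 0 = 0 ∧ u' 0 = 0 ∧
  ContinuousOn u (Ico 0 T) ∧ ContinuousOn u' (Ico 0 T) ∧
  (∀ t ∈ Ioo (0:ℝ) T, HasDerivAt u (u' t) t) ∧
  (∀ t ∈ Ico (0:ℝ) T, 0 ≤ u' t ∧ u' t ≤ 1/2) ∧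
  MeasureTheory.IntegrableOn
    (fun t => t⁻¹ * sSup ((fun s => Real.sqrt (u s / s + u' s)) '' Ioc (0:ℝ) t))
    (Ioo (0:ℝ) T) volume

/-- The point `U_t = −u(t)·e_{n+1}` (resp. `V_r = −v(r)·e_{n+1}`). -/
def vertexPt {n : ℕ} (u : ℝ → ℝ) (t : ℝ) : Eucl (n+1) := snocE (0 : Eucl n) (-(u t))

/-- Condition (V3): for all `0 < t < T`, the segment joining `U_t = −u(t)eₙ` with any
point of `∂Ω ∩ B_t` does not intersect `Ω`. -/
def VisibilityV3 {n : ℕ} (Ω : Set (Eucl (n+1))) (u : ℝ → ℝ) (T : ℝ) : Prop :=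
  ∀ t ∈ Ioo (0:ℝ) T, ∀ x ∈ frontier Ω ∩ ball (0 : Eucl (n+1)) t,
    Disjoint (segment ℝ (vertexPt u t) x) Ω

/-- Off-centric condition (V3'): for all `0 < r < R`, any segment joining
`V_r = −v(r)eₙ` with a point of `∂Ω ∩ B_r(V_r)` does not intersect `Ω`. -/
def VisibilityV3' {n : ℕ} (Ω : Set (Eucl (n+1))) (v : ℝ → ℝ) (R : ℝ) : Prop :=
  ∀ r ∈ Ioo (0:ℝ) R, ∀ x ∈ frontier Ω ∩ ball (vertexPt v r : Eucl (n+1)) r,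
    Disjoint (segment ℝ (vertexPt v r) x) Ω

/-- The visibility property at `0` (centered form). -/
def Visibility {n : ℕ} (Ω : Set (Eucl (n+1))) (u u' : ℝ → ℝ) (T : ℝ) : Prop :=
  VisibilityV12 u u' T ∧ VisibilityV3 Ω u T

/-- The visibility property at `0` (off-centric form). -/
def Visibility' {n : ℕ} (Ω : Set (Eucl (n+1))) (v v' : ℝ → ℝ) (R : ℝ) : Prop :=
  VisibilityV12 v v' R ∧ VisibilityV3' Ω v R

/-- Local graphical representation of `∂Ω` near `0 ∈ ∂Ω` in the cylinder
`B'_ρ × (−3m, 3m)` as the epigraph of `ω`. -/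
def GraphRep {n : ℕ} (Ω : Set (Eucl (n+1))) (ω : Eucl n → ℝ) (ρ m : ℝ) : Prop :=
  Ω ∩ {x : Eucl (n+1) | ‖initE x‖ < ρ ∧ |lastE x| < 3*m} =
    {x : Eucl (n+1) | ‖initE x‖ < ρ ∧ ω (initE x) < lastE x ∧ lastE x < 3*m}

open scoped Pointwise

/-! ### Auxiliary lemmas -/

section Aux

open scoped Pointwise

lemma initE_snocE' {n : ℕ} (x : Eucl n) (t : ℝ) : initE (snocE x t) = x := by
  ext i; simp [initE, snocE, Fin.init_snoc]
  exact congrFun (Fin.init_snoc (α := fun _ : Fin (n+1) => ℝ) t (x.ofLp)) i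

lemma lastE_snocE' {n : ℕ} (x : Eucl n) (t : ℝ) : lastE (snocE x t) = t := by
  simp [lastE, snocE]

lemma snocE_add' {n : ℕ} (x y : Eucl n) (s t : ℝ) :
    snocE (x + y) (s + t) = snocE x s + snocE y t := by
  ext i
  refine Fin.lastCases ?_ (fun j => ?_) i
  · simp [snocE]
  · simp [snocE]

lemma snocE_smul' {n : ℕ} (c : ℝ) (x : Eucl n) (t : ℝ) :
    snocE (c • x) (c * t) = c • snocE x t := by
  ext i
  refine Fin.lastCases ?_ (fun j => ?_) i
  · simp [snocE]
  · simp [snocE]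

lemma norm_sq_eucl {n : ℕ} (x : Eucl (n+1)) : ‖x‖^2 = ‖initE x‖^2 + (lastE x)^2 := by
  rw [EuclideanSpace.norm_eq, EuclideanSpace.norm_eq,
    Real.sq_sqrt (by positivity), Real.sq_sqrt (by positivity),
    Fin.sum_univ_castSucc (f := fun i => ‖x i‖^2)]
  have h : ∑ i : Fin n, ‖initE x i‖^2 = ∑ i : Fin n, ‖x i.castSucc‖^2 := by
    apply Finset.sum_congr rfl; intro i _; simp [initE, Fin.init]
  rw [h, lastE]; simp [sq_abs]

lemma norm_snocE_sq {n : ℕ} (x : Eucl n) (t : ℝ) :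
    ‖snocE x t‖^2 = ‖x‖^2 + t^2 := by
  rw [norm_sq_eucl, initE_snocE', lastE_snocE']

lemma norm_initE_le {n : ℕ} (x : Eucl (n+1)) : ‖initE x‖ ≤ ‖x‖ := by
  have h : ‖initE x‖^2 ≤ ‖x‖^2 := by rw [norm_sq_eucl]; nlinarith [sq_nonneg (lastE x)]
  exact le_of_pow_le_pow_left₀ two_ne_zero (norm_nonneg _) h

lemma abs_lastE_le {n : ℕ} (x : Eucl (n+1)) : |lastE x| ≤ ‖x‖ := by
  have h : |lastE x|^2 ≤ ‖x‖^2 := by rw [norm_sq_eucl, sq_abs]; nlinarith [sq_nonneg ‖initE x‖]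
  exact le_of_pow_le_pow_left₀ two_ne_zero (norm_nonneg _) h

lemma norm_snocE_le {n : ℕ} (x : Eucl n) (t : ℝ) : ‖snocE x t‖ ≤ ‖x‖ + |t| := by
  have h : ‖snocE x t‖^2 ≤ (‖x‖ + |t|)^2 := by
    rw [norm_snocE_sq]; nlinarith [norm_nonneg x, abs_nonneg t, sq_abs t]
  exact le_of_pow_le_pow_left₀ two_ne_zero (by positivity) h

lemma norm_snocE_zero {n : ℕ} (t : ℝ) : ‖snocE (0 : Eucl n) t‖ = |t| := by
  have h := norm_snocE_sq (0 : Eucl n) t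
  rw [norm_zero] at h
  rw [← Real.sqrt_sq (norm_nonneg _), h]
  simpa using Real.sqrt_sq_eq_abs t

lemma initE_add {n : ℕ} (x y : Eucl (n+1)) : initE (x + y) = initE x + initE y := by
  ext i; simp [initE, Fin.init]

lemma initE_smul {n : ℕ} (c : ℝ) (x : Eucl (n+1)) : initE (c • x) = c • initE x := by
  ext i; simp [initE, Fin.init]

lemma lastE_add {n : ℕ} (x y : Eucl (n+1)) : lastE (x + y) = lastE x + lastE y := by
  simp [lastE]

lemma lastE_smul {n : ℕ} (c : ℝ) (x : Eucl (n+1)) : lastE (c • x) = c * lastE x := by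
  simp [lastE]

lemma continuous_initE {n : ℕ} : Continuous (initE : Eucl (n+1) → Eucl n) := by
  apply (EuclideanSpace.equiv (Fin n) ℝ).symm.continuous.comp
  exact continuous_pi (fun i => (continuous_apply i.castSucc).comp
    (EuclideanSpace.equiv (Fin (n+1)) ℝ).continuous)

lemma continuous_lastE {n : ℕ} : Continuous (lastE : Eucl (n+1) → ℝ) := by
  have h : (lastE : Eucl (n+1) → ℝ)
      = (fun f : Fin (n+1) → ℝ => f (Fin.last n)) ∘ (EuclideanSpace.equiv (Fin (n+1)) ℝ) := rfl
  rw [h]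
  exact (continuous_apply (Fin.last n)).comp (EuclideanSpace.equiv (Fin (n+1)) ℝ).continuous

/-! ### Facts about the visibility function `u` -/

structure UH (u u' : ℝ → ℝ) (T : ℝ) : Prop where
  hT : 0 < T
  hu0 : u 0 = 0
  hu'0 : u' 0 = 0
  hcu : ContinuousOn u (Ico 0 T)
  hcu' : ContinuousOn u' (Ico 0 T)
  hderiv : ∀ t ∈ Ioo (0:ℝ) T, HasDerivAt u (u' t) t
  hb : ∀ t ∈ Ico (0:ℝ) T, 0 ≤ u' t ∧ u' t ≤ 1/2

variable {T : ℝ} {u u' : ℝ → ℝ}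

lemma u_le_mul (h : UH u u' T)
    {ε t : ℝ} (ht : t ∈ Ico (0:ℝ) T) (hε : ∀ s ∈ Ioo (0:ℝ) t, u' s ≤ ε) :
    u t ≤ ε * t := by
  rcases eq_or_lt_of_le ht.1 with h0 | h0
  · simp [← h0, h.hu0]
  have hmono : MonotoneOn (fun s => ε * s - u s) (Icc 0 t) := by
    apply monotoneOn_of_deriv_nonneg (convex_Icc 0 t)
    · exact (continuousOn_const.mul continuousOn_id).sub
        (h.hcu.mono (Icc_subset_Ico_right ht.2))
    · rw [interior_Icc]
      intro s hs
      exact ((hasDerivAt_id s).const_mul ε |>.sub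
        (h.hderiv s ⟨hs.1, hs.2.trans ht.2⟩)).differentiableAt.differentiableWithinAt
    · rw [interior_Icc]
      intro s hs
      have hd : deriv (fun s => ε * s - u s) s = ε - u' s := by
        have hh := ((hasDerivAt_id s).const_mul ε |>.sub (h.hderiv s ⟨hs.1, hs.2.trans ht.2⟩))
        exact (by simpa using hh.deriv : deriv ((fun y => ε * y) - u) s = ε - u' s)
      rw [hd]
      have := hε s hs
      linarith
  have := hmono (left_mem_Icc.2 h0.le) (right_mem_Icc.2 h0.le) h0.le
  simp only [h.hu0, mul_zero, sub_zero] at this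
  linarith

lemma u_nonneg (h : UH u u' T) {t : ℝ} (ht : t ∈ Ico (0:ℝ) T) : 0 ≤ u t := by
  rcases eq_or_lt_of_le ht.1 with h0 | h0
  · simp [← h0, h.hu0]
  have hmono : MonotoneOn u (Icc 0 t) := by
    apply monotoneOn_of_deriv_nonneg (convex_Icc 0 t) (h.hcu.mono (Icc_subset_Ico_right ht.2))
    · rw [interior_Icc]; intro s hs
      exact (h.hderiv s ⟨hs.1, hs.2.trans ht.2⟩).differentiableAt.differentiableWithinAt
    · rw [interior_Icc]; intro s hs
      rw [(h.hderiv s ⟨hs.1, hs.2.trans ht.2⟩).deriv]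
      exact (h.hb s ⟨hs.1.le, hs.2.trans ht.2⟩).1
  have hm := hmono (left_mem_Icc.2 h0.le) (right_mem_Icc.2 h0.le) h0.le
  rw [h.hu0] at hm
  exact hm

lemma u_le_half (h : UH u u' T) {t : ℝ} (ht : t ∈ Ico (0:ℝ) T) : u t ≤ t/2 := by
  have := u_le_mul h (ε := 1/2) ht
    (fun s hs => (h.hb s ⟨hs.1.le, hs.2.trans ht.2⟩).2)
  linarith

/-! ### The maximal function `G` from condition (V2) -/

def Gfun (u u' : ℝ → ℝ) (t : ℝ) : ℝ :=
  sSup ((fun s => Real.sqrt (u s / s + u' s)) '' Ioc (0:ℝ) t)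

lemma G_elt_mem (h : UH u u' T) {s t : ℝ} (hs : s ∈ Ioc (0:ℝ) t) (ht : t < T) :
    Real.sqrt (u s / s + u' s) ≤ 1 := by
  have hsT : s ∈ Ico (0:ℝ) T := ⟨hs.1.le, lt_of_le_of_lt hs.2 ht⟩
  have h1 : u s / s ≤ 1/2 := by
    rw [div_le_iff₀ hs.1]
    have := u_le_half h hsT; linarith
  have h2 := (h.hb s hsT).2
  have h3 : u s / s + u' s ≤ 1 := by linarith
  calc Real.sqrt (u s / s + u' s) ≤ Real.sqrt 1 := Real.sqrt_le_sqrt h3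
    _ = 1 := Real.sqrt_one

lemma G_bddAbove (h : UH u u' T) {t : ℝ} (ht : t < T) :
    BddAbove ((fun s => Real.sqrt (u s / s + u' s)) '' Ioc (0:ℝ) t) := by
  refine ⟨1, ?_⟩
  rintro _ ⟨s, hs, rfl⟩
  exact G_elt_mem h hs ht

lemma G_nonneg (h : UH u u' T) {t : ℝ} (ht : 0 < t) (ht' : t < T) : 0 ≤ Gfun u u' t := by
  have hmem : Real.sqrt (u t / t + u' t) ∈ (fun s => Real.sqrt (u s / s + u' s)) '' Ioc (0:ℝ) t :=
    ⟨t, right_mem_Ioc.2 ht, rfl⟩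
  exact le_trans (Real.sqrt_nonneg _) (le_csSup (G_bddAbove h ht') hmem)

lemma G_mono (h : UH u u' T) {s t : ℝ} (hs : 0 < s) (hst : s ≤ t) (ht : t < T) :
    Gfun u u' s ≤ Gfun u u' t :=
  csSup_le_csSup (G_bddAbove h ht) ((nonempty_Ioc.2 hs).image _)
    (image_mono (Ioc_subset_Ioc_right hst))

lemma u_div_le_G (h : UH u u' T) {t : ℝ} (ht : 0 < t) (ht' : t < T) :
    u t / t ≤ Gfun u u' t := by
  have htT : t ∈ Ico (0:ℝ) T := ⟨ht.le, ht'⟩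
  have h0 : 0 ≤ u t / t := div_nonneg (u_nonneg h htT) ht.le
  have h1 : u t / t ≤ u t / t + u' t := le_add_of_nonneg_right (h.hb t htT).1
  have h2 : u t / t ≤ Real.sqrt (u t / t + u' t) := by
    rw [Real.le_sqrt h0 (le_trans h0 h1)]
    have hle : u t / t ≤ 1/2 := by
      rw [div_le_iff₀ ht]; have := u_le_half h htT; linarith
    nlinarith [(h.hb t htT).1, u_nonneg h htT]
  exact h2.trans (le_csSup (G_bddAbove h ht') ⟨t, right_mem_Ioc.2 ht, rfl⟩)

lemma G_tendsto (h : UH u u' T) :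
    ∀ ε > (0:ℝ), ∃ δ > (0:ℝ), δ < T ∧ ∀ t ∈ Ioc (0:ℝ) δ, Gfun u u' t ≤ ε := by
  intro ε hε
  have hcont : ContinuousWithinAt u' (Ico 0 T) 0 := h.hcu' 0 ⟨le_rfl, h.hT⟩
  have hev : ∀ᶠ s in nhdsWithin 0 (Ico 0 T), u' s < ε^2/2 := by
    apply hcont.eventually_lt continuousWithinAt_const
    rw [h.hu'0]; exact half_pos (pow_pos hε 2)
  rw [eventually_nhdsWithin_iff] at hev
  rcases Metric.eventually_nhds_iff.1 hev with ⟨δ₀, hδ₀, hδ⟩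
  refine ⟨min (δ₀/2) (T/2), lt_min (half_pos hδ₀) (half_pos h.hT),
    lt_of_le_of_lt (min_le_right _ _) (by linarith [h.hT]), ?_⟩
  intro t ht
  apply csSup_le ((nonempty_Ioc.2 ht.1).image _)
  rintro _ ⟨s, hs, rfl⟩
  have hsδ : s < δ₀ :=
    lt_of_le_of_lt (hs.2.trans ht.2) (lt_of_le_of_lt (min_le_left _ _) (by linarith))
  have hsT : s < T :=
    lt_of_le_of_lt (hs.2.trans ht.2) (lt_of_le_of_lt (min_le_right _ _) (by linarith [h.hT]))
  have hu's : ∀ x ∈ Ioo (0:ℝ) s, u' x < ε^2/2 := by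
    intro x hx
    apply hδ (by rw [Real.dist_eq, sub_zero, abs_of_pos hx.1]; linarith [hx.2])
      ⟨hx.1.le, hx.2.trans hsT⟩
  have hus : u s ≤ ε^2/2 * s := u_le_mul h ⟨hs.1.le, hsT⟩ (fun x hx => (hu's x hx).le)
  have h1 : u s / s ≤ ε^2/2 := by rw [div_le_iff₀ hs.1]; linarith
  have h2 : u' s < ε^2/2 := hδ (by rw [Real.dist_eq, sub_zero, abs_of_pos hs.1]; linarith)
    ⟨hs.1.le, hsT⟩
  calc Real.sqrt (u s / s + u' s) ≤ Real.sqrt (ε^2) := Real.sqrt_le_sqrt (by linarith)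
    _ = ε := Real.sqrt_sq hε.le

/-! ### Integral estimates from condition (V2) -/

lemma integrable_inv_Ioc {a b : ℝ} (ha : 0 < a) :
    IntegrableOn (fun t : ℝ => t⁻¹) (Ioc a b) := by
  apply IntegrableOn.mono_set (t := Icc a b) _ Ioc_subset_Icc_self
  apply ContinuousOn.integrableOn_Icc
  exact continuousOn_inv₀.mono (fun x hx => ne_of_gt (lt_of_lt_of_le ha hx.1))

lemma integral_inv_Ioc {a b : ℝ} (ha : 0 < a) (hab : a ≤ b) :
    ∫ t in Ioc a b, t⁻¹ = Real.log (b/a) := by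
  rw [← intervalIntegral.integral_of_le hab]
  exact integral_inv (notMem_uIcc_of_lt ha (lt_of_lt_of_le ha hab))

lemma step_bound (h : UH u u' T)
    (hint : IntegrableOn (fun t => t⁻¹ * Gfun u u' t) (Ioo (0:ℝ) T))
    {τ : ℝ} (hτ : 0 < τ) (hτT : τ < T) :
    Real.log 2 * Gfun u u' (τ/2) ≤ ∫ t in Ioc (τ/2) τ, t⁻¹ * Gfun u u' t := by
  have hsub : Ioc (τ/2) τ ⊆ Ioo (0:ℝ) T :=
    fun x hx => ⟨lt_trans (by linarith) hx.1, lt_of_le_of_lt hx.2 hτT⟩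
  have hint' : IntegrableOn (fun t => t⁻¹ * Gfun u u' t) (Ioc (τ/2) τ) := hint.mono_set hsub
  have hint2 : IntegrableOn (fun t : ℝ => t⁻¹ * Gfun u u' (τ/2)) (Ioc (τ/2) τ) :=
    (integrable_inv_Ioc (by linarith)).mul_const _
  have hmono : ∫ t in Ioc (τ/2) τ, t⁻¹ * Gfun u u' (τ/2)
      ≤ ∫ t in Ioc (τ/2) τ, t⁻¹ * Gfun u u' t := by
    apply setIntegral_mono_on hint2 hint' measurableSet_Ioc
    intro t ht
    have h1 : 0 < t := lt_trans (by linarith) ht.1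
    exact mul_le_mul_of_nonneg_left (G_mono h (by linarith) ht.1.le (lt_of_le_of_lt ht.2 hτT))
      (inv_nonneg.2 h1.le)
  have heq : ∫ t in Ioc (τ/2) τ, t⁻¹ * Gfun u u' (τ/2) = Real.log 2 * Gfun u u' (τ/2) := by
    rw [integral_mul_const, integral_inv_Ioc (by linarith) (by linarith)]
    congr 2
    field_simp
  linarith [hmono, heq.symm.le]

lemma chain_integral_bound (h : UH u u' T)
    (hint : IntegrableOn (fun t => t⁻¹ * Gfun u u' t) (Ioo (0:ℝ) T))
    {b : ℝ} (hb : 0 < b) (hbT : b < T) :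
    ∀ k : ℕ, Real.log 2 * ∑ j ∈ Finset.range k, Gfun u u' (b/2^(j+1)) ≤
      ∫ t in Ioc (b/2^k) b, t⁻¹ * Gfun u u' t := by
  intro k
  induction k with
  | zero => simp
  | succ k ih =>
    have h1 : b/2^(k+1) ≤ b/2^k := by
      apply div_le_div_of_nonneg_left hb.le (by positivity)
      exact pow_le_pow_right₀ (by norm_num) (Nat.le_succ k)
    have h2 : b/2^k ≤ b := by
      apply div_le_self hb.le
      exact one_le_pow₀ (by norm_num : (1:ℝ) ≤ 2)
    have hsplit : Ioc (b/2^(k+1)) b = Ioc (b/2^(k+1)) (b/2^k) ∪ Ioc (b/2^k) b :=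
      (Ioc_union_Ioc_eq_Ioc h1 h2).symm
    have hdisj : Disjoint (Ioc (b/2^(k+1)) (b/2^k)) (Ioc (b/2^k) b) := Ioc_disjoint_Ioc.2 (le_trans (min_le_left _ _) (le_max_right _ _))
    have hsub1 : Ioc (b/2^(k+1)) (b/2^k) ⊆ Ioo (0:ℝ) T :=
      fun x hx => ⟨lt_trans (show (0:ℝ) < b/2^(k+1) by positivity) hx.1,
        lt_of_le_of_lt (hx.2.trans h2) hbT⟩
    have hsub2 : Ioc (b/2^k) b ⊆ Ioo (0:ℝ) T :=
      fun x hx => ⟨lt_trans (show (0:ℝ) < b/2^k by positivity) hx.1, lt_of_le_of_lt hx.2 hbT⟩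
    rw [hsplit, setIntegral_union hdisj measurableSet_Ioc (hint.mono_set hsub1)
      (hint.mono_set hsub2)]
    rw [Finset.sum_range_succ, mul_add]
    have hstep := step_bound h hint (τ := b/2^k) (by positivity) (lt_of_le_of_lt h2 hbT)
    have heq : b/2^k/2 = b/2^(k+1) := by rw [pow_succ]; ring
    rw [heq] at hstep
    linarith

lemma sum_G_bound (h : UH u u' T)
    (hint : IntegrableOn (fun t => t⁻¹ * Gfun u u' t) (Ioo (0:ℝ) T))
    {b : ℝ} (hb : 0 < b) (hbT : b < T) (k : ℕ) :
    ∑ j ∈ Finset.range k, Gfun u u' (b/2^(j+1)) ≤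
      (Real.log 2)⁻¹ * ∫ t in Ioc (0:ℝ) b, t⁻¹ * Gfun u u' t := by
  have hlog : (0:ℝ) < Real.log 2 := Real.log_pos (by norm_num)
  have hsub : Ioc (0:ℝ) b ⊆ Ioo (0:ℝ) T := fun x hx => ⟨hx.1, lt_of_le_of_lt hx.2 hbT⟩
  have hmono : ∫ t in Ioc (b/2^k) b, t⁻¹ * Gfun u u' t
      ≤ ∫ t in Ioc (0:ℝ) b, t⁻¹ * Gfun u u' t := by
    apply setIntegral_mono_set (hint.mono_set hsub)
    · rw [EventuallyLE, ae_restrict_iff' measurableSet_Ioc]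
      apply ae_of_all
      intro t ht
      exact mul_nonneg (inv_nonneg.2 ht.1.le) (G_nonneg h ht.1 (lt_of_le_of_lt ht.2 hbT))
    · apply ae_of_all
      intro t ht
      exact ⟨lt_trans (by positivity) ht.1, ht.2⟩
  have h3 := (chain_integral_bound h hint hb hbT k).trans hmono
  rw [le_inv_mul_iff₀ hlog]
  exact h3

lemma tail_integral_tendsto (h : UH u u' T)
    (hint : IntegrableOn (fun t => t⁻¹ * Gfun u u' t) (Ioo (0:ℝ) T)) :
    ∀ ε > (0:ℝ), ∃ η > (0:ℝ), ∀ b, 0 < b → b ≤ η → b < T →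
      ∫ t in Ioc (0:ℝ) b, t⁻¹ * Gfun u u' t ≤ ε := by
  intro ε hε
  set hf : ℝ → ℝ := fun t => t⁻¹ * Gfun u u' t with hhf
  set s : ℕ → Set ℝ := fun i => Ioc (0:ℝ) (T/2/2^i) with hs
  have hanti : Antitone s := by
    intro i j hij
    apply Ioc_subset_Ioc_right
    apply div_le_div_of_nonneg_left (by linarith [h.hT]) (by positivity)
    exact pow_le_pow_right₀ (by norm_num) hij
  have hsub0 : ∀ i, s i ⊆ Ioo (0:ℝ) T := by
    intro i x hx
    refine ⟨hx.1, lt_of_le_of_lt hx.2 ?_⟩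
    calc T/2/2^i ≤ T/2/1 :=
        div_le_div_of_nonneg_left (by linarith [h.hT]) one_pos (one_le_pow₀ (by norm_num))
      _ < T := by linarith [h.hT]
  have hiInter : ⋂ i, s i = ∅ := by
    ext x
    simp only [mem_iInter, mem_empty_iff_false, iff_false]
    intro hx
    obtain ⟨i, hi⟩ := pow_unbounded_of_one_lt (T/2/x) (by norm_num : (1:ℝ) < 2)
    have h1 := (hx i).1
    have h2 := (hx i).2
    rw [div_div, le_div_iff₀ (by positivity)] at h2
    rw [div_lt_iff₀ h1] at hi
    nlinarith
  have htend := tendsto_setIntegral_of_antitone (μ := volume) (f := hf)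
    (fun i => measurableSet_Ioc) hanti ⟨0, hint.mono_set (hsub0 0)⟩
  rw [hiInter] at htend
  simp only [Measure.restrict_empty, integral_zero_measure] at htend
  have hev : ∀ᶠ i in atTop, ∫ t in s i, hf t < ε :=
    htend.eventually_lt tendsto_const_nhds hε
  obtain ⟨i, hi⟩ := hev.exists
  refine ⟨T/2/2^i, by have := h.hT; positivity, ?_⟩
  intro b hb hbη hbT
  have hsubs : Ioc (0:ℝ) b ⊆ s i := Ioc_subset_Ioc_right hbη
  have hmono : ∫ t in Ioc (0:ℝ) b, hf t ≤ ∫ t in s i, hf t := by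
    apply setIntegral_mono_set (hint.mono_set (hsub0 i))
    · rw [EventuallyLE, ae_restrict_iff' measurableSet_Ioc]
      apply ae_of_all
      intro t ht
      exact mul_nonneg (inv_nonneg.2 ht.1.le) (G_nonneg h ht.1 ((hsub0 i ht).2))
    · exact ae_of_all _ hsubs
  linarith

/-! ### Graph representation lemmas -/

variable {n : ℕ} {Ω : Set (Eucl (n+1))} {ω : Eucl n → ℝ} {ρ m : ℝ} {L : ℝ≥0}

lemma mem_Ω_iff (hrep : GraphRep Ω ω ρ m) {x : Eucl (n+1)}
    (h1 : ‖initE x‖ < ρ) (h2 : |lastE x| < 3*m) :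
    x ∈ Ω ↔ ω (initE x) < lastE x := by
  constructor
  · intro hx
    have hh : x ∈ Ω ∩ {x : Eucl (n+1) | ‖initE x‖ < ρ ∧ |lastE x| < 3*m} := ⟨hx, h1, h2⟩
    rw [hrep] at hh
    exact hh.2.1
  · intro hx
    have hh : x ∈ {x : Eucl (n+1) | ‖initE x‖ < ρ ∧ ω (initE x) < lastE x ∧ lastE x < 3*m} :=
      ⟨h1, hx, lt_of_le_of_lt (le_abs_self _) h2⟩
    rw [← hrep] at hh
    exact hh.1

lemma graph_mem_frontier (hΩ : IsOpen Ω) (hrep : GraphRep Ω ω ρ m) (hm : 0 < m)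
    (hωm : ∀ x' : Eucl n, ‖x'‖ < ρ → |ω x'| < m)
    {x' : Eucl n} (hx' : ‖x'‖ < ρ) : snocE x' (ω x') ∈ frontier Ω := by
  have hωx := hωm x' hx'
  constructor
  · rw [Metric.mem_closure_iff]
    intro ε hε
    refine ⟨snocE x' (ω x' + min (ε/2) m), ?_, ?_⟩
    · rw [mem_Ω_iff hrep]
      · rw [initE_snocE', lastE_snocE']
        have : 0 < min (ε/2) m := lt_min (by linarith) hm
        linarith
      · rw [initE_snocE']; exact hx'
      · rw [lastE_snocE']
        have h1 : min (ε/2) m ≤ m := min_le_right _ _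
        have h2 : 0 < min (ε/2) m := lt_min (by linarith) hm
        rw [abs_lt] at hωx ⊢
        constructor <;> linarith [hωx.1, hωx.2]
    · have hh : snocE x' (ω x' + min (ε/2) m) = snocE x' (ω x') + snocE 0 (min (ε/2) m) := by
        rw [← snocE_add', add_zero]
      rw [dist_comm, dist_eq_norm, hh]
      simp only [add_sub_cancel_left]
      rw [norm_snocE_zero, abs_of_pos (lt_min (by linarith) hm)]
      exact lt_of_le_of_lt (min_le_left _ _) (by linarith)
  · rw [hΩ.interior_eq]
    intro hmem
    rw [mem_Ω_iff hrep (by rw [initE_snocE']; exact hx')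
        (by rw [lastE_snocE']; exact lt_of_lt_of_le hωx (by linarith))] at hmem
    rw [initE_snocE', lastE_snocE'] at hmem
    exact lt_irrefl _ hmem

/-! ### The key visibility inequality -/

lemma scalar_alg {a b A B U : ℝ} (ha : 0 < a) (hab : a ≤ b)
    (h : a/b*B - (1-a/b)*U ≤ A) : B/b - (1/a - 1/b)*U ≤ A/a := by
  have hb : 0 < b := lt_of_lt_of_le ha hab
  rw [← sub_nonneg]
  have halg : A/a - (B/b - (1/a - 1/b)*U) = (A - (a/b*B - (1-a/b)*U))/a := by
    field_simp
  rw [halg]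
  apply div_nonneg _ ha.le
  linarith

lemma key_ineq (hΩ : IsOpen Ω) (hrep : GraphRep Ω ω ρ m) (hm : 0 < m)
    (hωLip : LipschitzWith L ω) (hω0 : ω 0 = 0)
    (hωm : ∀ x' : Eucl n, ‖x'‖ < ρ → |ω x'| < m)
    (hV3 : VisibilityV3 Ω u T)
    (hun : ∀ t ∈ Ico (0:ℝ) T, 0 ≤ u t) (huh : ∀ t ∈ Ico (0:ℝ) T, u t ≤ t/2)
    {x' : Eucl n} (hx' : x' ≠ 0)
    {a b : ℝ} (ha : 0 < a) (hab : a ≤ b)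
    (h1 : b * ‖x'‖ < ρ) (h2 : 2 * (‖x'‖ * (1 + L)) * b < T)
    (h3 : 2 * (‖x'‖ * (1 + L)) * b < m) :
    ω (b • x') / b - (1/a - 1/b) * u (2 * (‖x'‖ * (1 + L)) * b) ≤ ω (a • x') / a := by
  set r : ℝ := ‖x'‖ with hr
  have hr0 : 0 < r := norm_pos_iff.2 hx'
  set c : ℝ := r * (1 + L) with hc
  have hL0 : (0:ℝ) ≤ L := L.coe_nonneg
  have hc0 : 0 < c := by positivity
  have hb0 : 0 < b := lt_of_lt_of_le ha hab
  set t : ℝ := 2 * c * b with hts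
  have ht0 : 0 < t := by positivity
  have htT : t < T := h2
  have htm : t < m := h3
  have hut0 : 0 ≤ u t := hun t ⟨ht0.le, htT⟩
  have hut : u t ≤ c * b := by
    have := huh t ⟨ht0.le, htT⟩
    rw [hts] at this ⊢; linarith
  have hnbx : ‖b • x'‖ = b * r := by rw [norm_smul, Real.norm_eq_abs, abs_of_pos hb0]
  have hnax : ‖a • x'‖ = a * r := by rw [norm_smul, Real.norm_eq_abs, abs_of_pos ha]
  have hna : a * r < ρ := lt_of_le_of_lt (by nlinarith) h1
  have hωb : |ω (b • x')| ≤ L * (b * r) := by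
    have hh := hωLip.dist_le_mul (b • x') 0
    rw [hω0] at hh
    rw [Real.dist_eq, sub_zero, dist_zero_right, hnbx] at hh
    exact hh
  have hbρ : ‖b • x'‖ < ρ := by rw [hnbx]; exact h1
  set p : Eucl (n+1) := snocE (b • x') (ω (b • x')) with hp
  have hpf : p ∈ frontier Ω := graph_mem_frontier hΩ hrep hm hωm hbρ
  have hpb : p ∈ ball (0 : Eucl (n+1)) t := by
    rw [mem_ball, dist_zero_right]
    calc ‖p‖ ≤ ‖b • x'‖ + |ω (b • x')| := norm_snocE_le _ _
      _ ≤ b * r + L * (b * r) := by rw [hnbx]; linarith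
      _ = c * b := by rw [hc]; ring
      _ < t := by rw [hts]; nlinarith
  have hdisj := hV3 t ⟨ht0, htT⟩ p ⟨hpf, hpb⟩
  set lam : ℝ := a / b with hlam
  have hlam0 : 0 < lam := div_pos ha hb0
  have hlam1 : lam ≤ 1 := (div_le_one hb0).2 hab
  set z : Eucl (n+1) := snocE (a • x') (lam * ω (b • x') - (1 - lam) * u t) with hz
  have hzseg : z ∈ segment ℝ (vertexPt u t) p := by
    refine ⟨1 - lam, lam, by linarith, hlam0.le, by ring, ?_⟩
    show (1 - lam) • (snocE (0:Eucl n) (-(u t))) + lam • snocE (b • x') (ω (b • x')) = z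
    rw [← snocE_smul', ← snocE_smul', ← snocE_add', hz]
    have e1 : (1 - lam) • (0:Eucl n) + lam • (b • x') = a • x' := by
      rw [smul_zero, zero_add, smul_smul, hlam, div_mul_cancel₀ _ (ne_of_gt hb0)]
    have e2 : (1 - lam) * -(u t) + lam * ω (b • x') = lam * ω (b • x') - (1 - lam) * u t := by
      ring
    rw [e1, e2]
  have hznΩ : z ∉ Ω := fun hmem => (hdisj.ne_of_mem hzseg hmem) rfl
  have hzinit : initE z = a • x' := by rw [hz, initE_snocE']
  have hzlast : lastE z = lam * ω (b • x') - (1 - lam) * u t := by rw [hz, lastE_snocE']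
  have hzlast_bound : |lastE z| < 3 * m := by
    rw [hzlast, abs_lt]
    have h4 : |lam * ω (b • x')| ≤ L * (b * r) := by
      rw [abs_mul, abs_of_pos hlam0]
      calc lam * |ω (b • x')| ≤ 1 * |ω (b • x')| :=
            mul_le_mul_of_nonneg_right hlam1 (abs_nonneg _)
        _ = |ω (b • x')| := one_mul _
        _ ≤ L * (b * r) := hωb
    have h5 : (1 - lam) * u t ≤ u t := by
      have := mul_le_mul_of_nonneg_right (show (1 - lam) ≤ 1 by linarith) hut0
      linarith
    have h6 : 0 ≤ (1 - lam) * u t := mul_nonneg (by linarith) hut0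
    have h7 : L * (b * r) ≤ c * b := by
      have hcb : c * b = r * b + L * (b * r) := by rw [hc]; ring
      rw [hcb]
      nlinarith [mul_pos hr0 hb0]
    rw [abs_le] at h4
    have h8 : c * b < m := by
      have h9 : 0 < c * b := mul_pos hc0 hb0
      rw [hts] at htm
      linarith
    constructor <;> linarith [h4.1, h4.2]
  have hkey : ¬ (ω (a • x') < lastE z) := by
    intro hlt
    apply hznΩ
    rw [mem_Ω_iff hrep (by rw [hzinit, hnax]; exact hna) hzlast_bound, hzinit]
    exact hlt
  push_neg at hkey
  rw [hzlast, hlam] at hkey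
  exact scalar_alg ha hab hkey

/-! ### Chaining and convergence -/

lemma chain_lemma {g G E : ℝ → ℝ} {c δ₀ : ℝ}
    (hc : 0 < c)
    (hG0 : ∀ t, 0 < t → t ≤ 2*c*δ₀ → 0 ≤ G t)
    (hE : ∀ b, 0 < b → b ≤ δ₀ → 0 ≤ E b ∧ E b ≤ 2*c*b * G (2*c*b))
    (hkey : ∀ a b, 0 < a → a ≤ b → b ≤ δ₀ → g b - (1/a - 1/b) * E b ≤ g a) :
    ∀ k : ℕ, ∀ a b, 0 < a → a ≤ b → b ≤ δ₀ → b ≤ 2^k * a →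
      g b - 4*c* (∑ j ∈ Finset.range (k+1), G (2*c*b/2^j)) ≤ g a := by
  have hterm : ∀ b : ℝ, ∀ j : ℕ, 0 < b → b ≤ δ₀ → 0 ≤ G (2*c*b/2^j) := by
    intro b j hb hbδ
    apply hG0 _ (by positivity)
    calc 2*c*b/2^j ≤ 2*c*b/1 :=
          div_le_div_of_nonneg_left (by positivity) one_pos (one_le_pow₀ (by norm_num))
      _ = 2*c*b := div_one _
      _ ≤ 2*c*δ₀ := by nlinarith
  have hstep : ∀ a b, 0 < a → a ≤ b → b ≤ δ₀ → b ≤ 2*a →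
      g b - 4*c*G (2*c*b) ≤ g a := by
    intro a b ha hab hbδ hb2
    have hb : 0 < b := lt_of_lt_of_le ha hab
    have hfrac : 1/a - 1/b ≤ 2/b := by
      have h1 : 1/a ≤ 2/b := by rw [div_le_div_iff₀ ha hb]; linarith
      have h2 : 0 ≤ 1/b := by positivity
      linarith
    have hfrac0 : 0 ≤ 1/a - 1/b := by
      have := one_div_le_one_div_of_le ha hab
      linarith
    obtain ⟨hE0, hE1⟩ := hE b hb hbδ
    have hGb : 0 ≤ G (2*c*b) := by
      have := hterm b 0 hb hbδ
      simpa using this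
    have h3 : (1/a - 1/b) * E b ≤ (2/b) * (2*c*b * G (2*c*b)) := by
      apply mul_le_mul hfrac hE1 hE0
      positivity
    have heq : (2/b) * (2*c*b * G (2*c*b)) = 4*c*G (2*c*b) := by
      field_simp
      ring
    have := hkey a b ha hab hbδ
    rw [heq] at h3
    linarith
  intro k
  induction k with
  | zero =>
    intro a b ha hab hbδ hba
    rw [pow_zero, one_mul] at hba
    have hab' : a = b := le_antisymm hab hba
    subst hab'
    have h1 := hstep a a ha le_rfl hbδ (by linarith)
    have hsum : G (2*c*a) ≤ ∑ j ∈ Finset.range 1, G (2*c*a/2^j) := by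
      rw [Finset.sum_range_one, pow_zero, div_one]
    nlinarith [hterm a 0 ha hbδ]
  | succ k ih =>
    intro a b ha hab hbδ hba
    have hb : 0 < b := lt_of_lt_of_le ha hab
    have hsum_split : ∑ j ∈ Finset.range (k+2), G (2*c*b/2^j)
        = (∑ j ∈ Finset.range (k+1), G (2*c*b/2^(j+1))) + G (2*c*b) := by
      rw [Finset.sum_range_succ' (fun j => G (2*c*b/2^j)) (k+1)]
      congr 1
      rw [pow_zero, div_one]
    have hrest : 0 ≤ ∑ j ∈ Finset.range (k+1), G (2*c*b/2^(j+1)) := by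
      apply Finset.sum_nonneg
      intro j _
      exact hterm b (j+1) hb hbδ
    by_cases hb2 : b ≤ 2*a
    · have h1 := hstep a b ha hab hbδ hb2
      rw [hsum_split]
      nlinarith [hrest]
    · push_neg at hb2
      have hmid0 : (0:ℝ) < b/2 := by linarith
      have hamid : a ≤ b/2 := by linarith
      have hmidδ : b/2 ≤ δ₀ := by linarith
      have hpow : (2:ℝ)^(k+1) = 2 * 2^k := by rw [pow_succ]; ring
      have hmid2 : b/2 ≤ 2^k * a := by
        rw [hpow] at hba
        linarith
      have h1 := ih a (b/2) ha hamid hmidδ hmid2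
      have h2 := hstep (b/2) b hmid0 (by linarith) hbδ (by linarith)
      have hre : ∀ j : ℕ, 2*c*(b/2)/2^j = 2*c*b/2^(j+1) := by
        intro j
        rw [pow_succ]
        field_simp
      have hsum_eq : ∑ j ∈ Finset.range (k+1), G (2*c*(b/2)/2^j)
          = ∑ j ∈ Finset.range (k+1), G (2*c*b/2^(j+1)) := by
        apply Finset.sum_congr rfl
        intro j _
        rw [hre j]
      rw [hsum_eq] at h1
      rw [hsum_split]
      nlinarith [hterm b 0 hb hbδ]

lemma tendsto_limsup_of_quasimono {g : ℝ → ℝ} {K : ℝ}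
    (hbd : ∀ᶠ s in 𝓝[>] (0:ℝ), |g s| ≤ K)
    (hqm : ∀ ε > (0:ℝ), ∃ δ > (0:ℝ), ∀ a b, 0 < a → a ≤ b → b ≤ δ → g b - ε ≤ g a) :
    Tendsto g (𝓝[>] (0:ℝ)) (𝓝 (limsup g (𝓝[>] (0:ℝ)))) := by
  set A := limsup g (𝓝[>] (0:ℝ)) with hA
  have hbd_le : IsBoundedUnder (· ≤ ·) (𝓝[>] (0:ℝ)) g :=
    isBoundedUnder_of_eventually_le (a := K)
      (by filter_upwards [hbd] with s hs using le_of_abs_le hs)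
  have hbd_ge : IsBoundedUnder (· ≥ ·) (𝓝[>] (0:ℝ)) g :=
    isBoundedUnder_of_eventually_ge (a := -K)
      (by filter_upwards [hbd] with s hs using neg_le_of_abs_le hs)
  have hcob : IsCoboundedUnder (· ≤ ·) (𝓝[>] (0:ℝ)) g := hbd_ge.isCoboundedUnder_le
  rw [Metric.tendsto_nhds]
  intro ε hε
  have hup : ∀ᶠ s in 𝓝[>] (0:ℝ), g s < A + ε/2 :=
    eventually_lt_of_limsup_lt (by linarith) hbd_le
  obtain ⟨δ, hδ0, hδ⟩ := hqm (ε/4) (by linarith)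
  have hfreq : ∃ᶠ b in 𝓝[>] (0:ℝ), A - ε/4 < g b :=
    frequently_lt_of_lt_limsup hcob (by linarith)
  have hev : ∀ᶠ b in 𝓝[>] (0:ℝ), b ∈ Ioc (0:ℝ) δ :=
    Ioc_mem_nhdsGT hδ0
  obtain ⟨b₀, hb₀g, hb₀mem⟩ := (hfreq.and_eventually hev).exists
  have hlow : ∀ᶠ a in 𝓝[>] (0:ℝ), A - ε/2 < g a := by
    have hmem : Ioo (0:ℝ) b₀ ∈ 𝓝[>] (0:ℝ) := Ioo_mem_nhdsGT hb₀mem.1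
    filter_upwards [hmem] with a ha
    have := hδ a b₀ ha.1 ha.2.le hb₀mem.2
    linarith
  filter_upwards [hup, hlow] with s h1 h2
  rw [Real.dist_eq, abs_lt]
  constructor <;> linarith

/-! ### Hausdorff distance estimate for epigraphs -/

lemma haus_aux {φ ψ : Eucl n → ℝ} {R δ : ℝ} (hR : 0 < R) (hδ0 : 0 < δ)
    (hδR : δ < R/6)
    (hclose : ∀ z : Eucl n, ‖z‖ ≤ R → |φ z - ψ z| ≤ δ)
    (hhom : ∀ c : ℝ, 0 < c → ∀ z : Eucl n, ψ (c • z) = c * ψ z) :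
    hausdorffDist ({x : Eucl (n+1) | φ (initE x) < lastE x} ∩ ball 0 R)
      ({x : Eucl (n+1) | ψ (initE x) < lastE x} ∩ ball 0 R) ≤ 5*δ := by
  set η : ℝ := 3*δ/R with hη
  have hη0 : 0 < η := by positivity
  have hη1 : η < 1 := by rw [hη, div_lt_one hR]; linarith
  have hηR : η * R = 3*δ := by rw [hη]; field_simp
  set e : Eucl (n+1) := snocE (0 : Eucl n) 1 with he
  have hne : ‖e‖ = 1 := by rw [he, norm_snocE_zero]; norm_num
  have hmove : ∀ x : Eucl (n+1), x ∈ ball (0:Eucl (n+1)) R →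
      ((1-η) • x + (2*δ) • e ∈ ball (0:Eucl (n+1)) R ∧
       dist x ((1-η) • x + (2*δ) • e) ≤ 5*δ ∧
       initE ((1-η) • x + (2*δ) • e) = (1-η) • initE x ∧
       lastE ((1-η) • x + (2*δ) • e) = (1-η) * lastE x + 2*δ) := by
    intro x hx
    rw [mem_ball, dist_zero_right] at hx
    refine ⟨?_, ?_, ?_, ?_⟩
    · rw [mem_ball, dist_zero_right]
      calc ‖(1-η) • x + (2*δ) • e‖ ≤ ‖(1-η) • x‖ + ‖(2*δ) • e‖ := norm_add_le _ _
        _ = (1-η) * ‖x‖ + 2*δ := by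
            rw [norm_smul, norm_smul, hne, Real.norm_eq_abs, Real.norm_eq_abs,
              abs_of_pos (by linarith), abs_of_pos (by linarith), mul_one]
        _ < (1-η) * R + 2*δ := by
            have := mul_lt_mul_of_pos_left hx (show (0:ℝ) < 1-η by linarith)
            linarith
        _ ≤ R := by nlinarith [hηR]
    · have hxy : x - ((1-η) • x + (2*δ) • e) = η • x - (2*δ) • e := by
        rw [sub_smul, one_smul]
        abel
      rw [dist_eq_norm, hxy]
      calc ‖η • x - (2*δ) • e‖ ≤ ‖η • x‖ + ‖(2*δ) • e‖ := norm_sub_le _ _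
        _ = η * ‖x‖ + 2*δ := by
            rw [norm_smul, norm_smul, hne, Real.norm_eq_abs, Real.norm_eq_abs,
              abs_of_pos hη0, abs_of_pos (by linarith), mul_one]
        _ ≤ η * R + 2*δ := by nlinarith
        _ = 5*δ := by rw [hηR]; ring
    · rw [initE_add, initE_smul, initE_smul, he, initE_snocE', smul_zero, add_zero]
    · rw [lastE_add, lastE_smul, lastE_smul, he, lastE_snocE']
      ring
  apply hausdorffDist_le_of_mem_dist (by positivity)
  · rintro x ⟨hφx, hxB⟩
    obtain ⟨hB, hd, hi, hl⟩ := hmove x hxB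
    refine ⟨(1-η) • x + (2*δ) • e, ⟨?_, hB⟩, hd⟩
    show ψ (initE _) < lastE _
    rw [hi, hl, hhom (1-η) (by linarith)]
    have hnx : ‖initE x‖ ≤ R := by
      rw [mem_ball, dist_zero_right] at hxB
      exact (norm_initE_le x).trans hxB.le
    have h1 : ψ (initE x) ≤ φ (initE x) + δ := by
      have := hclose (initE x) hnx
      rw [abs_le] at this
      linarith [this.1]
    have h2 : φ (initE x) < lastE x := hφx
    nlinarith [hη1, hδ0]
  · rintro x ⟨hψx, hxB⟩
    obtain ⟨hB, hd, hi, hl⟩ := hmove x hxB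
    refine ⟨(1-η) • x + (2*δ) • e, ⟨?_, hB⟩, hd⟩
    show φ (initE _) < lastE _
    rw [hi, hl]
    have hnx : ‖(1-η) • initE x‖ ≤ R := by
      rw [norm_smul, Real.norm_eq_abs, abs_of_pos (show (0:ℝ) < 1-η by linarith)]
      rw [mem_ball, dist_zero_right] at hxB
      nlinarith [norm_initE_le x, norm_nonneg (initE x)]
    have h1 : φ ((1-η) • initE x) ≤ ψ ((1-η) • initE x) + δ := by
      have := hclose _ hnx
      rw [abs_le] at this
      linarith [this.2]
    rw [hhom (1-η) (by linarith)] at h1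
    have h2 : ψ (initE x) < lastE x := hψx
    nlinarith [hη1, hδ0]

/-! ### Identification of the blow-up with an epigraph -/

lemma smul_inter_ball_eq (hrep : GraphRep Ω ω ρ m) {R s : ℝ}
    (hR : 0 < R) (hs : 0 < s) (h1 : s * R ≤ ρ) (h2 : s * R ≤ 3*m) :
    (s⁻¹ • Ω) ∩ ball (0:Eucl (n+1)) R
      = {x : Eucl (n+1) | ω (s • initE x) / s < lastE x} ∩ ball 0 R := by
  ext x
  simp only [mem_inter_iff, mem_setOf_eq]
  constructor
  · rintro ⟨hxΩ, hxB⟩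
    refine ⟨?_, hxB⟩
    rw [mem_inv_smul_set_iff₀ (ne_of_gt hs)] at hxΩ
    rw [mem_ball, dist_zero_right] at hxB
    have hinit : ‖initE (s • x)‖ < ρ := by
      rw [initE_smul, norm_smul, Real.norm_eq_abs, abs_of_pos hs]
      calc s * ‖initE x‖ ≤ s * ‖x‖ :=
            mul_le_mul_of_nonneg_left (norm_initE_le x) hs.le
        _ < s * R := by exact mul_lt_mul_of_pos_left hxB hs
        _ ≤ ρ := h1
    have hlast : |lastE (s • x)| < 3*m := by
      rw [lastE_smul, abs_mul, abs_of_pos hs]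
      calc s * |lastE x| ≤ s * ‖x‖ :=
            mul_le_mul_of_nonneg_left (abs_lastE_le x) hs.le
        _ < s * R := mul_lt_mul_of_pos_left hxB hs
        _ ≤ 3*m := h2
    rw [mem_Ω_iff hrep hinit hlast, initE_smul, lastE_smul] at hxΩ
    rw [div_lt_iff₀ hs, mul_comm]
    exact hxΩ
  · rintro ⟨hxω, hxB⟩
    refine ⟨?_, hxB⟩
    rw [mem_inv_smul_set_iff₀ (ne_of_gt hs)]
    rw [mem_ball, dist_zero_right] at hxB
    have hinit : ‖initE (s • x)‖ < ρ := by
      rw [initE_smul, norm_smul, Real.norm_eq_abs, abs_of_pos hs]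
      calc s * ‖initE x‖ ≤ s * ‖x‖ :=
            mul_le_mul_of_nonneg_left (norm_initE_le x) hs.le
        _ < s * R := mul_lt_mul_of_pos_left hxB hs
        _ ≤ ρ := h1
    have hlast : |lastE (s • x)| < 3*m := by
      rw [lastE_smul, abs_mul, abs_of_pos hs]
      calc s * |lastE x| ≤ s * ‖x‖ :=
            mul_le_mul_of_nonneg_left (abs_lastE_le x) hs.le
        _ < s * R := mul_lt_mul_of_pos_left hxB hs
        _ ≤ 3*m := h2
    rw [mem_Ω_iff hrep hinit hlast, initE_smul, lastE_smul]
    rw [div_lt_iff₀ hs, mul_comm] at hxω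
    exact hxω

end Aux

lemma unif_conv {n : ℕ} {ω ω₀ : Eucl n → ℝ} {L : ℝ≥0}
    (hωLip : LipschitzWith L ω)
    (hlip0 : ∀ x y : Eucl n, |ω₀ x - ω₀ y| ≤ L * ‖x - y‖)
    (htends : ∀ x' : Eucl n, Tendsto (fun s : ℝ => ω (s • x') / s) (𝓝[>] (0:ℝ)) (𝓝 (ω₀ x')))
    {R ε : ℝ} (hR : 0 < R) (hε : 0 < ε) :
    ∀ᶠ s in 𝓝[>] (0:ℝ), ∀ z : Eucl n, ‖z‖ ≤ R → |ω (s • z) / s - ω₀ z| ≤ ε := by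
  have hL0 : (0:ℝ) ≤ L := L.coe_nonneg
  set r₀ : ℝ := ε/(3*(L+1)) with hr₀def
  have hr₀ : 0 < r₀ := by positivity
  have hLr : (L:ℝ) * r₀ ≤ ε/3 := by
    rw [hr₀def]
    rw [mul_div_assoc']
    rw [div_le_div_iff₀ (by positivity) (by norm_num)]
    nlinarith
  obtain ⟨t, ht⟩ := (isCompact_closedBall (0:Eucl n) R).elim_finite_subcover
    (fun y : Eucl n => ball y r₀) (fun y => isOpen_ball)
    (fun z _ => mem_iUnion.2 ⟨z, mem_ball_self hr₀⟩)
  have hev : ∀ᶠ s in 𝓝[>] (0:ℝ), ∀ y ∈ t, |ω (s • y)/s - ω₀ y| ≤ ε/3 := by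
    rw [Finset.eventually_all]
    intro y _
    have hh := Metric.tendsto_nhds.1 (htends y) (ε/3) (by linarith)
    filter_upwards [hh] with s hs
    rw [Real.dist_eq] at hs
    exact hs.le
  filter_upwards [hev, self_mem_nhdsWithin] with s hs hspos
  intro z hz
  have hsp : (0:ℝ) < s := hspos
  have hz' : z ∈ closedBall (0:Eucl n) R := by rwa [mem_closedBall, dist_zero_right]
  have hzt := ht hz'
  rw [mem_iUnion₂] at hzt
  obtain ⟨y, hyt, hzy⟩ := hzt
  rw [mem_ball, dist_eq_norm] at hzy
  have hLz : |ω (s • z)/s - ω (s • y)/s| ≤ L * r₀ := by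
    rw [div_sub_div_same, abs_div, abs_of_pos hsp, div_le_iff₀ hsp]
    have h1 : |ω (s • z) - ω (s • y)| ≤ L * (s * ‖z - y‖) := by
      have h2 := hωLip.dist_le_mul (s • z) (s • y)
      rw [Real.dist_eq] at h2
      have h3 : dist (s • z) (s • y) = s * ‖z - y‖ := by
        rw [dist_eq_norm, ← smul_sub, norm_smul, Real.norm_eq_abs, abs_of_pos hsp]
      rw [h3] at h2
      exact h2
    calc |ω (s • z) - ω (s • y)| ≤ L * (s * ‖z - y‖) := h1
      _ ≤ L * (s * r₀) := by
          have h6 : ((L:ℝ)*s) * ‖z - y‖ ≤ ((L:ℝ)*s) * r₀ :=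
            mul_le_mul_of_nonneg_left hzy.le (mul_nonneg hL0 hsp.le)
          nlinarith [h6]
      _ = L * r₀ * s := by ring
  have h0z : |ω₀ y - ω₀ z| ≤ L * r₀ := by
    have h4 := hlip0 y z
    have h5 : ‖y - z‖ ≤ r₀ := by
      rw [norm_sub_rev]
      exact hzy.le
    calc |ω₀ y - ω₀ z| ≤ L * ‖y - z‖ := h4
      _ ≤ L * r₀ := mul_le_mul_of_nonneg_left h5 hL0
  have hy := hs y hyt
  have htri1 : |ω (s • z)/s - ω₀ z| ≤ |ω (s • z)/s - ω (s • y)/s| + |ω (s • y)/s - ω₀ z| :=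
    abs_sub_le _ _ _
  have htri2 : |ω (s • y)/s - ω₀ z| ≤ |ω (s • y)/s - ω₀ y| + |ω₀ y - ω₀ z| :=
    abs_sub_le _ _ _
  linarith



set_option maxHeartbeats 4000000

/-- existence of the tangent cone. If `Ω` satisfies the visibility
property at `0 ∈ ∂Ω` (being locally the epigraph of a Lipschitz `ω` with `ω(0)=0`),
then the one-sided radial derivatives `D⁺_ν ω(0) = lim_{s→0⁺} ω(sν)/s` exist, and,
`Ω₀` being the open cone given by the epigraph of the associated `1`-homogeneous
function `ω₀`, one has `dist_H(s⁻¹Ω ∩ B_R, Ω₀ ∩ B_R) → 0` as `s → 0⁺`, for all `R > 0`. -/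
theorem tangent_cone_exists {n : ℕ}
    (Ω : Set (Eucl (n+1))) (hΩ : IsOpen Ω) (h0 : (0 : Eucl (n+1)) ∈ frontier Ω)
    (ρ m : ℝ) (hρ : 0 < ρ) (hm : 0 < m)
    (ω : Eucl n → ℝ) (L : ℝ≥0) (hωLip : LipschitzWith L ω) (hω0 : ω 0 = 0)
    (hωm : ∀ x' : Eucl n, ‖x'‖ < ρ → |ω x'| < m)
    (hrep : GraphRep Ω ω ρ m)
    (T : ℝ) (u u' : ℝ → ℝ) (hvis : Visibility Ω u u' T) :
    ∃ ω₀ : Eucl n → ℝ,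
      (∀ x' : Eucl n, Tendsto (fun s : ℝ => ω (s • x') / s) (𝓝[>] (0:ℝ)) (𝓝 (ω₀ x'))) ∧
      IsOpen {x : Eucl (n+1) | ω₀ (initE x) < lastE x} ∧
      (∀ c : ℝ, 0 < c →
        c • {x : Eucl (n+1) | ω₀ (initE x) < lastE x} =
          {x : Eucl (n+1) | ω₀ (initE x) < lastE x}) ∧
      ∀ R : ℝ, 0 < R →
        Tendsto (fun s : ℝ =>
            Metric.hausdorffDist ((s⁻¹ • Ω) ∩ ball (0 : Eucl (n+1)) R)
              ({x : Eucl (n+1) | ω₀ (initE x) < lastE x} ∩ ball (0 : Eucl (n+1)) R))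
          (𝓝[>] (0:ℝ)) (𝓝 0) := by
  classical
  obtain ⟨⟨hT, hu0, hu'0, hcu, hcu', hderiv, hb', hint⟩, hV3⟩ := hvis
  have hUH : UH u u' T := ⟨hT, hu0, hu'0, hcu, hcu', hderiv, hb'⟩
  have hL0 : (0:ℝ) ≤ L := L.coe_nonneg
  have hun : ∀ t ∈ Ico (0:ℝ) T, 0 ≤ u t := fun t ht => u_nonneg hUH ht
  have huh : ∀ t ∈ Ico (0:ℝ) T, u t ≤ t/2 := fun t ht => u_le_half hUH ht
  have hintG : IntegrableOn (fun t => t⁻¹ * Gfun u u' t) (Ioo (0:ℝ) T) := hint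
  set ω₀ : Eucl n → ℝ :=
    fun x' => limsup (fun s : ℝ => ω (s • x') / s) (𝓝[>] (0:ℝ)) with hω₀def
  -- Step A: the radial limits exist
  have htends : ∀ x' : Eucl n,
      Tendsto (fun s : ℝ => ω (s • x') / s) (𝓝[>] (0:ℝ)) (𝓝 (ω₀ x')) := by
    intro x'
    rcases eq_or_ne x' 0 with rfl | hx'
    · have hzero : (fun s : ℝ => ω (s • (0:Eucl n)) / s) = fun _ => (0:ℝ) := by
        funext s; simp [hω0]
      have hω₀0 : ω₀ 0 = 0 := by
        rw [hω₀def]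
        simp only
        rw [hzero, limsup_const]
      rw [hω₀0, hzero]
      exact tendsto_const_nhds
    · -- nontrivial direction
      apply tendsto_limsup_of_quasimono (K := (L:ℝ) * ‖x'‖)
      · -- boundedness
        filter_upwards [self_mem_nhdsWithin] with s hs
        have hsp : (0:ℝ) < s := hs
        have h1 : |ω (s • x')| ≤ L * (s * ‖x'‖) := by
          have h2 := hωLip.dist_le_mul (s • x') 0
          rw [hω0, Real.dist_eq, sub_zero, dist_zero_right, norm_smul,
            Real.norm_eq_abs, abs_of_pos hsp] at h2
          exact h2
        rw [abs_div, abs_of_pos hsp, div_le_iff₀ hsp]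
        calc |ω (s • x')| ≤ L * (s * ‖x'‖) := h1
          _ = L * ‖x'‖ * s := by ring
      · -- quasi-monotonicity
        intro ε hε
        set r : ℝ := ‖x'‖ with hrdef
        have hr0 : 0 < r := norm_pos_iff.2 hx'
        set c : ℝ := r * (1 + L) with hcdef
        have hc0 : 0 < c := by positivity
        set δ₀ : ℝ := min (ρ/(2*r)) (min (T/(4*c)) (m/(4*c))) with hδ₀def
        have hδ₀0 : 0 < δ₀ := by
          apply lt_min (by positivity) (lt_min (by positivity) (by positivity))
        -- the facts needed for b ≤ δ₀
        have hfacts : ∀ b : ℝ, 0 < b → b ≤ δ₀ →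
            b * r < ρ ∧ 2*c*b < T ∧ 2*c*b < m := by
          intro b hb hbδ
          have e1 : b ≤ ρ/(2*r) := hbδ.trans (min_le_left _ _)
          have e2 : b ≤ T/(4*c) := hbδ.trans ((min_le_right _ _).trans (min_le_left _ _))
          have e3 : b ≤ m/(4*c) := hbδ.trans ((min_le_right _ _).trans (min_le_right _ _))
          refine ⟨?_, ?_, ?_⟩
          · rw [le_div_iff₀ (by positivity)] at e1
            nlinarith
          · rw [le_div_iff₀ (by positivity)] at e2
            nlinarith
          · rw [le_div_iff₀ (by positivity)] at e3
            nlinarith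
        -- the key inequality in the form needed by chain_lemma
        have hkey : ∀ a b, 0 < a → a ≤ b → b ≤ δ₀ →
            (fun s : ℝ => ω (s • x') / s) b - (1/a - 1/b) * u (2*c*b)
              ≤ (fun s : ℝ => ω (s • x') / s) a := by
          intro a b ha hab hbδ
          have hb0 : 0 < b := lt_of_lt_of_le ha hab
          obtain ⟨f1, f2, f3⟩ := hfacts b hb0 hbδ
          have hx := key_ineq hΩ hrep hm hωLip hω0 hωm hV3 hun huh hx' ha hab f1 f2 f3
          exact hx
        have hE : ∀ b, 0 < b → b ≤ δ₀ →
            0 ≤ u (2*c*b) ∧ u (2*c*b) ≤ 2*c*b * Gfun u u' (2*c*b) := by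
          intro b hb hbδ
          obtain ⟨f1, f2, f3⟩ := hfacts b hb hbδ
          have ht0 : 0 < 2*c*b := by positivity
          refine ⟨hun _ ⟨ht0.le, f2⟩, ?_⟩
          have := u_div_le_G hUH ht0 f2
          rw [div_le_iff₀ ht0] at this
          calc u (2*c*b) ≤ Gfun u u' (2*c*b) * (2*c*b) := this
            _ = 2*c*b * Gfun u u' (2*c*b) := by ring
        have hG0 : ∀ t, 0 < t → t ≤ 2*c*δ₀ → 0 ≤ Gfun u u' t := by
          intro t ht0 htδ
          apply G_nonneg hUH ht0
          have e2 : δ₀ ≤ T/(4*c) := (min_le_right _ _).trans (min_le_left _ _)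
          rw [le_div_iff₀ (by positivity)] at e2
          nlinarith [hT]
        have hchain := chain_lemma hc0 hG0 hE hkey
        -- choose the smallness threshold δ
        obtain ⟨δ₁, hδ₁0, hδ₁T, hδ₁⟩ := G_tendsto hUH (ε/(8*c)) (by positivity)
        obtain ⟨η, hη0, hη⟩ := tail_integral_tendsto hUH hintG
          (Real.log 2 * ε/(8*c)) (by positivity)
        refine ⟨min δ₀ (min (δ₁/(2*c)) (η/(2*c))),
          lt_min hδ₀0 (lt_min (by positivity) (by positivity)), ?_⟩
        intro a b ha hab hbδ
        have hb0 : 0 < b := lt_of_lt_of_le ha hab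
        have hbδ₀ : b ≤ δ₀ := hbδ.trans (min_le_left _ _)
        have hb1 : 2*c*b ≤ δ₁ := by
          have hh := hbδ.trans ((min_le_right _ _).trans (min_le_left _ _))
          rw [le_div_iff₀ (by positivity)] at hh
          nlinarith
        have hb2 : 2*c*b ≤ η := by
          have hh := hbδ.trans ((min_le_right _ _).trans (min_le_right _ _))
          rw [le_div_iff₀ (by positivity)] at hh
          nlinarith
        obtain ⟨f1, f2, f3⟩ := hfacts b hb0 hbδ₀
        obtain ⟨k, hk⟩ := pow_unbounded_of_one_lt (b/a) (by norm_num : (1:ℝ) < 2)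
        have hba : b ≤ 2^k * a := by
          rw [div_lt_iff₀ ha] at hk
          linarith
        have hch := hchain k a b ha hab hbδ₀ hba
        have hsum_split : ∑ j ∈ Finset.range (k+1), Gfun u u' (2*c*b/2^j)
            = (∑ j ∈ Finset.range k, Gfun u u' (2*c*b/2^(j+1))) + Gfun u u' (2*c*b) := by
          rw [Finset.sum_range_succ' (fun j => Gfun u u' (2*c*b/2^j)) k]
          congr 1
          rw [pow_zero, div_one]
        have hG1 : Gfun u u' (2*c*b) ≤ ε/(8*c) := hδ₁ _ ⟨by positivity, hb1⟩
        have hF : ∫ t in Ioc (0:ℝ) (2*c*b), t⁻¹ * Gfun u u' t ≤ Real.log 2 * ε/(8*c) :=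
          hη _ (by positivity) hb2 f2
        have hSG := sum_G_bound hUH hintG (b := 2*c*b) (by positivity) f2 k
        have hlog : (0:ℝ) < Real.log 2 := Real.log_pos (by norm_num)
        have hS : ∑ j ∈ Finset.range (k+1), Gfun u u' (2*c*b/2^j) ≤ ε/(4*c) := by
          rw [hsum_split]
          have h2' : (Real.log 2)⁻¹ * ∫ t in Ioc (0:ℝ) (2*c*b), t⁻¹ * Gfun u u' t
              ≤ (Real.log 2)⁻¹ * (Real.log 2 * ε/(8*c)) :=
            mul_le_mul_of_nonneg_left hF (by positivity)
          have h3' : (Real.log 2)⁻¹ * (Real.log 2 * ε/(8*c)) = ε/(8*c) := by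
            field_simp
          have h4' := hSG.trans (h2'.trans_eq h3')
          have hcne : c ≠ 0 := ne_of_gt hc0
          have he : ε/(8*c) + ε/(8*c) = ε/(4*c) := by field_simp; ring
          linarith
        have h4S : 4*c*(∑ j ∈ Finset.range (k+1), Gfun u u' (2*c*b/2^j)) ≤ ε := by
          have hh := mul_le_mul_of_nonneg_left hS (by positivity : (0:ℝ) ≤ 4*c)
          calc 4*c*(∑ j ∈ Finset.range (k+1), Gfun u u' (2*c*b/2^j))
              ≤ 4*c*(ε/(4*c)) := hh
            _ = ε := by field_simp
        linarith
  -- Step B: homogeneity of ω₀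
  have hom : ∀ c : ℝ, 0 < c → ∀ x' : Eucl n, ω₀ (c • x') = c * ω₀ x' := by
    intro c hc x'
    have hcomp : Tendsto (fun s : ℝ => s * c) (𝓝[>] (0:ℝ)) (𝓝[>] (0:ℝ)) := by
      rw [tendsto_nhdsWithin_iff]
      constructor
      · have h1 : Tendsto (fun s : ℝ => s * c) (𝓝 (0:ℝ)) (𝓝 (0 * c)) :=
          tendsto_id.mul_const c
        rw [zero_mul] at h1
        exact h1.mono_left nhdsWithin_le_nhds
      · filter_upwards [self_mem_nhdsWithin] with s hs
        exact mul_pos hs hc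
    have h1 : Tendsto (fun s : ℝ => c * (ω ((s*c) • x') / (s*c))) (𝓝[>] (0:ℝ))
        (𝓝 (c * ω₀ x')) := ((htends x').comp hcomp).const_mul c
    have h2 : (fun s : ℝ => c * (ω ((s*c) • x') / (s*c)))
        =ᶠ[𝓝[>] (0:ℝ)] (fun s : ℝ => ω (s • (c • x')) / s) := by
      filter_upwards [self_mem_nhdsWithin] with s hs
      have hsp : (0:ℝ) < s := hs
      have hc' : c ≠ 0 := ne_of_gt hc
      have hs' : s ≠ 0 := ne_of_gt hsp
      rw [smul_smul]
      field_simp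
    exact tendsto_nhds_unique (htends (c • x')) (Tendsto.congr' h2 h1)
  -- Step C: ω₀ is Lipschitz
  have hlip0 : ∀ x y : Eucl n, |ω₀ x - ω₀ y| ≤ L * ‖x - y‖ := by
    intro x y
    have hev : ∀ᶠ s in 𝓝[>] (0:ℝ), |ω (s • x)/s - ω (s • y)/s| ≤ L * ‖x - y‖ := by
      filter_upwards [self_mem_nhdsWithin] with s hs
      have hsp : (0:ℝ) < s := hs
      rw [div_sub_div_same, abs_div, abs_of_pos hsp, div_le_iff₀ hsp]
      have h2 := hωLip.dist_le_mul (s • x) (s • y)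
      rw [Real.dist_eq, dist_eq_norm, ← smul_sub, norm_smul, Real.norm_eq_abs,
        abs_of_pos hsp] at h2
      calc |ω (s • x) - ω (s • y)| ≤ L * (s * ‖x - y‖) := h2
        _ = L * ‖x - y‖ * s := by ring
    have htd := ((htends x).sub (htends y)).abs
    exact le_of_tendsto htd hev
  have hω₀cont : Continuous ω₀ := by
    have hLW : LipschitzWith L ω₀ := by
      apply LipschitzWith.of_dist_le_mul
      intro x y
      rw [Real.dist_eq, dist_eq_norm]
      exact hlip0 x y
    exact hLW.continuous
  have hopen : IsOpen {x : Eucl (n+1) | ω₀ (initE x) < lastE x} :=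
    isOpen_lt (hω₀cont.comp continuous_initE) continuous_lastE
  refine ⟨ω₀, htends, hopen, ?_, ?_⟩
  · -- cone property
    intro c hc
    ext x
    rw [mem_smul_set_iff_inv_smul_mem₀ (ne_of_gt hc)]
    simp only [mem_setOf_eq]
    rw [initE_smul, lastE_smul, hom c⁻¹ (inv_pos.2 hc)]
    exact mul_lt_mul_iff_right₀ (inv_pos.2 hc)
  · -- Hausdorff convergence
    intro R hR
    rw [Metric.tendsto_nhds]
    intro ε hε
    set δ : ℝ := min (ε/11) (R/7) with hδdef
    have hδ0 : 0 < δ := lt_min (by positivity) (by positivity)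
    have hδR : δ < R/6 := lt_of_le_of_lt (min_le_right _ _) (by linarith)
    have hδε : 5*δ < ε := by
      have := min_le_left (ε/11) (R/7)
      have h5 : 5*δ ≤ 5*(ε/11) := by linarith
      linarith
    have hcl := unif_conv hωLip hlip0 htends hR hδ0
    have hsmall : Ioo (0:ℝ) (min (ρ/R) (3*m/R)) ∈ 𝓝[>] (0:ℝ) :=
      Ioo_mem_nhdsGT (lt_min (by positivity) (by positivity))
    filter_upwards [hcl, hsmall] with s hclose hsI
    have hsp : 0 < s := hsI.1
    have hb1 : s * R ≤ ρ := by
      have h1 : s < ρ/R := lt_of_lt_of_le hsI.2 (min_le_left _ _)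
      rw [lt_div_iff₀ hR] at h1
      linarith
    have hb2 : s * R ≤ 3*m := by
      have h1 : s < 3*m/R := lt_of_lt_of_le hsI.2 (min_le_right _ _)
      rw [lt_div_iff₀ hR] at h1
      linarith
    have heq := smul_inter_ball_eq hrep hR hsp hb1 hb2
    rw [heq]
    have hhaus := haus_aux (φ := fun z => ω (s • z)/s) (ψ := ω₀) hR hδ0 hδR hclose
      (fun c hc z => hom c hc z)
    rw [Real.dist_eq, sub_zero, abs_of_nonneg hausdorffDist_nonneg]
    exact lt_of_le_of_lt hhaus hδε
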